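/- Let A be a unital C*-algebra, a ∈ A left invertible up to a projection p (i.e., ∃b, b a (1-p) = 1-p), and r ≤ 1-p a projection. Then there exists a projection s ∈ A Murray–von Neumann equivalent to r with s·(a r) = a r, and s is minimal with this property: any projection s₁ with s₁ a r = a r satisfies s₁ ≥ s. -/

import Mathlib

/-- A projection in a C*-algebra: a self-adjoint idempotent. -/
def IsProjection {A : Type*} [Ring A] [StarRing A] (p : A) : Prop :=
  star p = p ∧ p * p = p

/-- Murray–von Neumann equivalence of `r` and `s`: there is `v` with
`v v* = r` and `v* v = s`. -/
def MvNEquiv {A : Type*} [Ring A] [StarRing A] (r s : A) : Prop :=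
  ∃ v : A, v * star v = r ∧ star v * v = s

section Aux
variable {A : Type*} [CStarAlgebra A]

lemma commute_of_mem_elemental' {z w : A} (hz : star z = z) (hc : Commute w z)
    {u : A} (hu : u ∈ StarAlgebra.elemental ℂ z) : Commute w u := by
  induction hu using StarAlgebra.elemental.induction_on with
  | self => exact hc
  | star_self => rwa [hz]
  | algebraMap r => exact (Algebra.commutes r w).symm
  | add u hu v hv hcu hcv => exact hcu.add_right hcv
  | mul u hu v hv hcu hcv => exact hcu.mul_right hcv
  | closure s hs hmem v hv =>
      have hcl : IsClosed {u : A | Commute w u} :=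
        isClosed_eq (continuous_mul_left w) (continuous_mul_right w)
      exact closure_minimal hmem hcl hv

lemma cfc_complex_mem_elemental' (z : A) [hz : IsStarNormal z] (f : ℂ → ℂ)
    (hf : ContinuousOn f (spectrum ℂ z)) : cfc f z ∈ StarAlgebra.elemental ℂ z := by
  rw [cfc_apply f z, cfcHom_eq_of_isStarNormal]
  exact SetLike.coe_mem _

end Aux

/-- If `a` is left invertible up to `p` and `r ≤ 1-p` is a projection, then
there is a projection `s ∼ r` with `s (a r) = a r`, minimal with this
property. -/
theorem exists_minimal_range_projection
    {A : Type*} [NormedRing A] [StarRing A] [CStarRing A] [CompleteSpace A]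
    [NormedAlgebra ℂ A] [StarModule ℂ A]
    (a p r : A) (hp : IsProjection p) (hr : IsProjection r)
    (hleft : ∃ b : A, b * (a * (1 - p)) = 1 - p)
    (hrp : r * (1 - p) = r) :
    ∃ s : A, IsProjection s ∧ MvNEquiv r s ∧ s * (a * r) = a * r ∧
      ∀ s₁ : A, IsProjection s₁ → s₁ * (a * r) = a * r → s₁ * s = s := by
  letI : CStarAlgebra A := { }
  letI := CStarAlgebra.spectralOrder A
  letI := CStarAlgebra.spectralOrderedRing A
  obtain ⟨b, hb⟩ := hleft
  obtain ⟨hrs, hrm⟩ := hr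
  by_cases hr0 : r = 0
  · exact ⟨0, ⟨by simp, by simp⟩, ⟨0, by simp [hr0], by simp⟩, by simp [hr0],
      fun s₁ _ _ => by simp⟩
  have h1r : (1 - p) * r = r := by
    have := congrArg star hrp
    simpa [star_mul, star_sub, hp.1, hrs] using this
  obtain ⟨x, hx⟩ : ∃ x, a * r = x := ⟨_, rfl⟩
  rw [hx]
  obtain ⟨c, hcdef⟩ : ∃ c, r * b = c := ⟨_, rfl⟩
  have hcx : c * x = r := by
    have e1 : x = a * (1 - p) * r := by rw [← hx, mul_assoc, h1r]
    rw [e1, ← hcdef, ← mul_assoc, mul_assoc r b, mul_assoc r (b * (a * (1 - p))), hb, h1r, hrm]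
  have hc0 : c ≠ 0 := fun hcc => hr0 (by rw [← hcx, hcc, zero_mul])
  have hxr : x * r = x := by rw [← hx, mul_assoc, hrm]
  obtain ⟨y, hy⟩ : ∃ y, star x * x = y := ⟨_, rfl⟩
  have hy0 : 0 ≤ y := hy ▸ star_mul_self_nonneg x
  have hysa : star y = y := by rw [← hy, star_mul, star_star]
  have hyr : y * r = y := by rw [← hy, mul_assoc, hxr]
  have hry : r * y = y := by
    have := congrArg star hyr
    rwa [star_mul, hrs, hysa] at this
  have h1r0 : 0 ≤ (1 : A) - r := by
    have h1rsub : (1 : A) - r = star (1 - r) * (1 - r) := by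
      rw [star_sub, star_one, hrs]
      have e : ((1 : A) - r) * (1 - r) = 1 - r - r + r * r := by noncomm_ring
      rw [e, hrm]
      abel
    exact h1rsub ▸ star_mul_self_nonneg _
  have hr0' : 0 ≤ r := by
    have : r = star r * r := by rw [hrs, hrm]
    exact this ▸ star_mul_self_nonneg r
  obtain ⟨y', hy'⟩ : ∃ y', y + (1 - r) = y' := ⟨_, rfl⟩
  have hy'0 : 0 ≤ y' := hy' ▸ add_nonneg hy0 h1r0
  have hy'sa : star y' = y' := by rw [← hy', star_add, star_sub, star_one, hrs, hysa]
  have hy'r : y' * r = y := by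
    rw [← hy', add_mul, hyr, sub_mul, one_mul, hrm, sub_self, add_zero]
  have hry' : r * y' = y := by
    rw [← hy', mul_add, hry, mul_sub, mul_one, hrm, sub_self, add_zero]
  -- invertibility of y'
  have hK : (0 : ℝ) < ‖c‖ ^ 2 := pow_pos (norm_pos_iff.mpr hc0) 2
  have hrK : r ≤ ‖c‖ ^ 2 • y := by
    have h1 : star c * c ≤ algebraMap ℝ A (‖c‖ ^ 2) :=
      CStarAlgebra.star_mul_le_algebraMap_norm_sq
    have h2 := star_left_conjugate_le_conjugate h1 x
    have e2 : star x * (star c * c) * x = r := by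
      calc star x * (star c * c) * x = star (c * x) * (c * x) := by
            rw [star_mul c x]; noncomm_ring
        _ = r := by rw [hcx, hrs, hrm]
    have e3 : star x * algebraMap ℝ A (‖c‖ ^ 2) * x = ‖c‖ ^ 2 • y := by
      rw [Algebra.algebraMap_eq_smul_one, mul_smul_comm, mul_one, smul_mul_assoc, hy]
    rw [← e2, ← e3]
    exact h2
  obtain ⟨ε, hεdef⟩ : ∃ ε : ℝ, min ((‖c‖ ^ 2)⁻¹) 1 = ε := ⟨_, rfl⟩
  have hε : (0 : ℝ) < ε := hεdef ▸ lt_min (inv_pos.mpr hK) one_pos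
  have hεy' : ε • (1 : A) ≤ y' := by
    have e1 : ε • (1 : A) = ε • r + ε • ((1 : A) - r) := by
      rw [← smul_add]
      congr 1
      abel
    have h2 : ε • r ≤ y := by
      calc ε • r ≤ (‖c‖ ^ 2)⁻¹ • r :=
            smul_le_smul_of_nonneg_right (hεdef ▸ min_le_left _ _) hr0'
        _ ≤ (‖c‖ ^ 2)⁻¹ • (‖c‖ ^ 2 • y) :=
            smul_le_smul_of_nonneg_left hrK (by positivity)
        _ = y := by rw [smul_smul, inv_mul_cancel₀ hK.ne', one_smul]
    have h3 : ε • ((1 : A) - r) ≤ 1 - r := by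
      nth_rewrite 2 [← one_smul ℝ ((1 : A) - r)]
      exact smul_le_smul_of_nonneg_right (hεdef ▸ min_le_right _ _) h1r0
    calc ε • (1 : A) = ε • r + ε • ((1 : A) - r) := e1
      _ ≤ y + (1 - r) := add_le_add h2 h3
      _ = y' := hy'
  have hunit1 : IsUnit (ε • (1 : A)) := by
    refine ⟨⟨ε • 1, ε⁻¹ • 1, ?_, ?_⟩, rfl⟩ <;>
      simp [smul_smul, mul_inv_cancel₀ hε.ne', inv_mul_cancel₀ hε.ne']
  have hy'unit : IsUnit y' :=
    CStarAlgebra.isUnit_of_le _ hεy' ⟨smul_nonneg hε.le zero_le_one, hunit1⟩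
  obtain ⟨z, hzdef⟩ : ∃ z, (↑hy'unit.unit⁻¹ : A) = z := ⟨_, rfl⟩
  have hzy' : z * y' = 1 := by rw [← hzdef]; exact hy'unit.val_inv_mul
  have hy'z : y' * z = 1 := by rw [← hzdef]; exact hy'unit.mul_val_inv
  have hzsa : star z = z := by
    have h1 : y' * star z = 1 := by
      have := congrArg star hzy'
      rwa [star_mul, hy'sa, star_one] at this
    calc star z = (z * y') * star z := by rw [hzy', one_mul]
      _ = z * (y' * star z) := mul_assoc z y' (star z)
      _ = z := by rw [h1, mul_one]
  have hz0 : 0 ≤ z := by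
    have h1 : star z * y' * z = z := by
      rw [mul_assoc, hy'z, mul_one, hzsa]
    exact h1 ▸ star_left_conjugate_nonneg hy'0 z
  have hzy : z * y = r := by rw [← hy'r, ← mul_assoc, hzy', one_mul]
  have hyz : y * z = r := by rw [← hry', mul_assoc, hy'z, mul_one]
  have hzr : z * r = r * z := by
    calc z * r = z * (y * z) := by rw [hyz]
      _ = (z * y) * z := (mul_assoc z y z).symm
      _ = r * z := by rw [hzy]
  have hzy'comm : Commute y' z := by rw [Commute, SemiconjBy, hzy', hy'z]
  -- facts about s = x * z * star x
  have hsx : (x * z * star x) * x = x := by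
    calc (x * z * star x) * x = x * (z * (star x * x)) := by noncomm_ring
      _ = x * (z * y) := by rw [hy]
      _ = x * r := by rw [hzy]
      _ = x := hxr
  have hssa : star (x * z * star x) = x * z * star x := by
    rw [star_mul, star_mul, star_star, hzsa, mul_assoc]
  have hss : (x * z * star x) * (x * z * star x) = x * z * star x := by
    calc (x * z * star x) * (x * z * star x)
        = x * ((z * (star x * x)) * (z * star x)) := by noncomm_ring
      _ = x * ((z * y) * (z * star x)) := by rw [hy]
      _ = x * (r * (z * star x)) := by rw [hzy]
      _ = (x * r) * (z * star x) := by noncomm_ring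
      _ = x * z * star x := by rw [hxr, mul_assoc]
  -- square root h of z
  have hzsa' : IsSelfAdjoint z := hzsa
  have hzn : IsStarNormal z := hzsa'.isStarNormal
  obtain ⟨h, hhdef⟩ : ∃ h, cfc Real.sqrt z = h := ⟨_, rfl⟩
  have hhsa : star h = h := hhdef ▸ (cfc_predicate Real.sqrt z).star_eq
  have hhh : h * h = z := by
    rw [← hhdef, ← cfc_mul ..,
      cfc_congr (g := fun t : ℝ => t) fun t ht => Real.mul_self_sqrt
        (spectrum_nonneg_of_nonneg hz0 ht),
      cfc_id' ℝ z]
  have hcomm : ∀ w : A, Commute w z → Commute w h := fun w hw => by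
    rw [← hhdef, cfc_real_eq_complex]
    exact commute_of_mem_elemental' hzsa hw <| cfc_complex_mem_elemental' z _ <|
      Continuous.continuousOn (by fun_prop)
  have hrh : Commute r h := hcomm r hzr.symm
  have hy'h : Commute y' h := hcomm y' hzy'comm
  have hhy'h : h * y' * h = 1 := by
    rw [mul_assoc, hy'h.eq, ← mul_assoc, hhh, hzy']
  refine ⟨x * z * star x, ⟨hssa, hss⟩, ⟨h * star x, ?_, ?_⟩, hsx,
    fun s₁ _ hs₁x => ?_⟩
  · -- v * star v = r
    have hvstar : star (h * star x) = x * h := by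
      rw [star_mul h (star x), star_star, hhsa]
    rw [hvstar]
    calc h * star x * (x * h) = h * (star x * x) * h := by noncomm_ring
      _ = h * (y' * r) * h := by rw [hy, hy'r]
      _ = (h * y') * (r * h) := by noncomm_ring
      _ = (h * y') * (h * r) := by rw [hrh.eq]
      _ = (h * y' * h) * r := by noncomm_ring
      _ = r := by rw [hhy'h, one_mul]
  · -- star v * v = s
    have hvstar : star (h * star x) = x * h := by
      rw [star_mul h (star x), star_star, hhsa]
    rw [hvstar]
    calc x * h * (h * star x) = x * (h * h) * star x := by noncomm_ring
      _ = x * z * star x := by rw [hhh]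
  · -- minimality
    calc s₁ * (x * z * star x) = (s₁ * x) * (z * star x) := by noncomm_ring
      _ = x * (z * star x) := by rw [hs₁x]
      _ = x * z * star x := (mul_assoc x z (star x)).symm
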